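/- Let X be an S-open subset of a product ∏_{t∈T} X_t of topological spaces, let T' be a locally projectively symmetric topology on X, let a = (a_t)_{t∈T} ∈ X, let (Y,d) be a metric space, and let f : (X,T') → Y be continuous at the point a. Then f is strongly separately continuous at a. -/

import Mathlib

open Function Filter Topology

/-- `Sigma1 x` (σ₁(x)): the set of points differing from `x` in at most one coordinate. -/
def Sigma1 {T : Type*} {X : T → Type*} (x : ∀ t, X t) : Set (∀ t, X t) :=
  {y | {t | y t ≠ x t}.Subsingleton}

/-- A set `A` is `S`-open if `σ₁(x) ⊆ A` for every `x ∈ A`. -/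
def SOpen {T : Type*} {X : T → Type*} (A : Set (∀ t, X t)) : Prop :=
  ∀ x ∈ A, Sigma1 x ⊆ A

theorem update_mem {T : Type*} [DecidableEq T] {X : T → Type*} {A : Set (∀ t, X t)}
    (hA : SOpen A) {x : ∀ t, X t} (hx : x ∈ A) (t : T) (v : X t) :
    Function.update x t v ∈ A := by
  apply hA x hx
  intro s hs s' hs'
  simp only [Set.mem_setOf_eq] at hs hs'
  have h1 : s = t := by
    by_contra h
    exact hs (Function.update_of_ne h v x)
  have h2 : s' = t := by
    by_contra h
    exact hs' (Function.update_of_ne h v x)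
  rw [h1, h2]

/-- The point `x_t^v`: `x` with its `t`-th coordinate replaced by `v`, as an element
of the `S`-open set `A`. -/
def updPt {T : Type*} [DecidableEq T] {X : T → Type*} {A : Set (∀ t, X t)}
    (hA : SOpen A) (x : ↥A) (t : T) (v : X t) : ↥A :=
  ⟨Function.update x.1 t v, update_mem hA x.2 t v⟩

/-- `f : (A, T') → Y` is strongly separately continuous at `a` (w.r.t. every variable):
for each `t`, `lim_{x → a} dist (f x) (f (x_t^a)) = 0`, the limit taken in `T'`. -/
def StrSepContAt {T : Type*} [DecidableEq T] {X : T → Type*} {A : Set (∀ t, X t)}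
    (hA : SOpen A) (T' : TopologicalSpace ↥A) {Y : Type*} [MetricSpace Y]
    (f : ↥A → Y) (a : ↥A) : Prop :=
  ∀ t : T, Filter.Tendsto (fun x : ↥A => dist (f x) (f (updPt hA x t (a.1 t))))
    (@nhds _ T' a) (nhds 0)

/-- `B ⊆ A` is projectively symmetric with respect to `a`: `x_t^a ∈ B` for all `x ∈ B`, `t`. -/
def ProjSym {T : Type*} [DecidableEq T] {X : T → Type*} {A : Set (∀ t, X t)}
    (hA : SOpen A) (B : Set ↥A) (a : ↥A) : Prop :=
  ∀ x ∈ B, ∀ t : T, updPt hA x t (a.1 t) ∈ B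

/-- A topology `T'` on `A` is locally projectively symmetric: every point has a
neighborhood base of sets projectively symmetric with respect to it. -/
def LocProjSym {T : Type*} [DecidableEq T] {X : T → Type*} {A : Set (∀ t, X t)}
    (hA : SOpen A) (T' : TopologicalSpace ↥A) : Prop :=
  ∀ x : ↥A, ∀ U ∈ @nhds _ T' x, ∃ V ∈ @nhds _ T' x, V ⊆ U ∧ ProjSym hA V x

/-- If a topology `T'` on an S-open set `A` is locally projectively symmetric and
`f : (A, T') → Y` is continuous at `a`, then `f` is strongly separately continuous at `a`. -/
theorem continuousAt_strSepContAt {T : Type*} [DecidableEq T] {X : T → Type*}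
    [∀ t, TopologicalSpace (X t)] {A : Set (∀ t, X t)} (hA : SOpen A)
    (T' : TopologicalSpace ↥A) (hsym : LocProjSym hA T') {Y : Type*} [MetricSpace Y]
    (f : ↥A → Y) (a : ↥A) (hf : @ContinuousAt _ _ T' _ f a) :
    StrSepContAt hA T' f a := by
  intro t
  rw [Metric.tendsto_nhds]
  intro ε hε
  have hU : {y : Y | dist y (f a) < ε / 2} ∈ nhds (f a) :=
    Metric.ball_mem_nhds _ (by linarith)
  have hU' := hf hU
  obtain ⟨V, hV, hVU, hVsym⟩ := hsym a _ hU'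
  filter_upwards [hV] with x hx
  have h1 : dist (f x) (f a) < ε / 2 := hVU hx
  have h2 : dist (f (updPt hA x t (a.1 t))) (f a) < ε / 2 := hVU (hVsym x hx t)
  have := dist_triangle (f x) (f a) (f (updPt hA x t (a.1 t)))
  rw [Real.dist_eq, sub_zero, abs_of_nonneg dist_nonneg]
  calc dist (f x) (f (updPt hA x t (a.1 t))) ≤ _ := dist_triangle _ (f a) _
    _ < ε := by rw [dist_comm (f a)]; linarith
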